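/- arXiv:2009.07805 — 3 statements merged into one kernel-verified Lean document; each statement's English description precedes it below -/
import Mathlib

section
/- Let (Ω, ℱ, P) be a probability space, let k be a positive natural number, and let Y, X₁, …, X_k be L² random variables on Ω such that X₁, …, X_k are essentially linearly independent, i.e. Var(∑_{j=1}^k a_j X_j) > 0 for every nonzero a ∈ ℝ^k. Then there is exactly one β ∈ ℝ^k and exactly one L² random variable ε on Ω such that Y = ∑_{j=1}^k X_j β_j + ε almost surely and E[X_j ε] = 0 for all 1 ≤ j ≤ k. -/
open MeasureTheory ProbabilityTheory Matrix

lemma my_integrable_mul {Ω : Type*} [MeasurableSpace Ω] {P : Measure Ω}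
    {f g : Ω → ℝ} (hf : MemLp f 2 P) (hg : MemLp g 2 P) :
    Integrable (fun ω => f ω * g ω) P := by
  have h := hg.smul (p := 2) (r := 1) hf
  rw [memLp_one_iff_integrable] at h
  simpa [Pi.smul_apply, smul_eq_mul, Pi.mul_def] using h

/-- **Theorem 2 ("strengthened" Proposition 1).**
If `Y, X₁, …, X_k` are L² random variables and `X₁, …, X_k` are essentially linearly
independent, then there exist exactly one `β ∈ ℝᵏ` and exactly one (up to a.e. equality)
L² random variable `ε` with `Y = ∑ j, X j * β j + ε` a.s. and `E[X j * ε] = 0` for all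
`j`. -/
theorem stmt3 {Ω : Type*} [MeasurableSpace Ω] (P : Measure Ω) [IsProbabilityMeasure P]
    (k : ℕ) (hk : 0 < k) (Y : Ω → ℝ) (X : Fin k → Ω → ℝ)
    (hY : MemLp Y 2 P) (hX : ∀ j, MemLp (X j) 2 P)
    (hli : ∀ a : Fin k → ℝ, a ≠ 0 →
      0 < variance (fun ω => ∑ j, a j * X j ω) P) :
    ∃ (β : Fin k → ℝ) (ε : Ω → ℝ),
      MemLp ε 2 P ∧
      (Y =ᵐ[P] fun ω => (∑ j, X j ω * β j) + ε ω) ∧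
      (∀ j, ∫ ω, X j ω * ε ω ∂P = 0) ∧
      ∀ (β' : Fin k → ℝ) (ε' : Ω → ℝ), MemLp ε' 2 P →
        (Y =ᵐ[P] fun ω => (∑ j, X j ω * β' j) + ε' ω) →
        (∀ j, ∫ ω, X j ω * ε' ω ∂P = 0) →
        β' = β ∧ ε' =ᵐ[P] ε := by
  classical
  set G : Matrix (Fin k) (Fin k) ℝ := fun i j => ∫ ω, X i ω * X j ω ∂P with hGdef
  set c : Fin k → ℝ := fun j => ∫ ω, X j ω * Y ω ∂P with hcdef
  have hSum : ∀ b : Fin k → ℝ, MemLp (fun ω => ∑ j, X j ω * b j) 2 P := by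
    intro b
    have h : ∀ j ∈ Finset.univ, MemLp (fun ω => b j * X j ω) 2 P :=
      fun j _ => (hX j).const_mul _
    have h2 := memLp_finset_sum Finset.univ h
    simp only [mul_comm] at h2 ⊢
    exact h2
  have key : ∀ (b : Fin k → ℝ) (j : Fin k),
      ∫ ω, X j ω * (∑ i, X i ω * b i) ∂P = ∑ i, G j i * b i := by
    intro b j
    have h1 : ∀ ω, X j ω * (∑ i, X i ω * b i) = ∑ i, (X j ω * X i ω) * b i := by
      intro ω; rw [Finset.mul_sum]; congr 1; ext i; ring
    simp_rw [h1]
    rw [integral_finset_sum _ (fun i _ => (my_integrable_mul (hX j) (hX i)).mul_const _)]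
    congr 1; ext i
    rw [integral_mul_const]
  have hquad : ∀ a : Fin k → ℝ,
      a ⬝ᵥ G.mulVec a = ∫ ω, (∑ j, a j * X j ω) ^ 2 ∂P := by
    intro a
    have h1 : ∀ ω, (∑ j, a j * X j ω) ^ 2
        = ∑ i, a i * (X i ω * ∑ j, X j ω * a j) := by
      intro ω
      rw [sq, Finset.sum_mul]
      congr 1; ext i
      rw [Finset.mul_sum, Finset.mul_sum, Finset.mul_sum]
      congr 1; ext j; ring
    simp_rw [h1]
    rw [integral_finset_sum]
    · simp only [dotProduct, Matrix.mulVec, integral_const_mul]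
      congr 1; ext i
      rw [key a i]
    · intro i _
      exact ((my_integrable_mul (hX i) (hSum a)).const_mul _)
  -- positive definiteness
  have hpos : G.PosDef := by
    refine Matrix.PosDef.of_dotProduct_mulVec_pos ?_ ?_
    · rw [Matrix.IsHermitian]
      refine Matrix.ext fun i j => ?_
      rw [Matrix.conjTranspose_apply, star_trivial, hGdef]
      simp_rw [mul_comm]
    · intro a ha
      have hvar := hli a ha
      have hmem : MemLp (fun ω => ∑ j, a j * X j ω) 2 P := by
        have h : ∀ j ∈ Finset.univ, MemLp (fun ω => a j * X j ω) 2 P :=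
          fun j _ => (hX j).const_mul _
        simpa using memLp_finset_sum Finset.univ h
      have hle := variance_le_expectation_sq (μ := P) hmem.aestronglyMeasurable
      simp only [star_trivial]
      rw [hquad a]
      calc (0:ℝ) < variance (fun ω => ∑ j, a j * X j ω) P := hvar
        _ ≤ ∫ ω, (∑ j, a j * X j ω) ^ 2 ∂P := by
            simpa [Pi.pow_apply] using hle
  have hdet : IsUnit G.det := isUnit_iff_ne_zero.mpr hpos.det_pos.ne'
  set β : Fin k → ℝ := G⁻¹.mulVec c with hβdef
  have hGβ : G.mulVec β = c := by
    rw [hβdef, Matrix.mulVec_mulVec, Matrix.mul_nonsing_inv _ hdet, Matrix.one_mulVec]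
  set ε : Ω → ℝ := fun ω => Y ω - ∑ j, X j ω * β j with hεdef
  have hεmem : MemLp ε 2 P := hY.sub (hSum β)
  have haeq : Y =ᵐ[P] fun ω => (∑ j, X j ω * β j) + ε ω := by
    filter_upwards with ω
    simp [hεdef]
  have horth : ∀ j, ∫ ω, X j ω * ε ω ∂P = 0 := by
    intro j
    have h1 : ∀ ω, X j ω * ε ω = X j ω * Y ω - X j ω * (∑ i, X i ω * β i) := by
      intro ω; simp [hεdef]; ring
    simp_rw [h1]
    rw [integral_sub (my_integrable_mul (hX j) hY) (my_integrable_mul (hX j) (hSum β))]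
    rw [key β j]
    have h2 : ∑ i, G j i * β i = c j := by
      have := congrFun hGβ j
      simpa [Matrix.mulVec, dotProduct] using this
    rw [h2]
    simp [hcdef]
  refine ⟨β, ε, hεmem, haeq, horth, ?_⟩
  intro β' ε' hε' haeq' horth'
  set d : Fin k → ℝ := fun i => β i - β' i with hddef
  have hee : ε' =ᵐ[P] fun ω => ε ω + ∑ j, X j ω * d j := by
    filter_upwards [haeq, haeq'] with ω h1 h2
    have h3 : (∑ j, X j ω * β j) + ε ω = (∑ j, X j ω * β' j) + ε' ω := by
      rw [← h1, ← h2]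
    have h4 : ∑ j, X j ω * d j = (∑ j, X j ω * β j) - ∑ j, X j ω * β' j := by
      rw [← Finset.sum_sub_distrib]
      congr 1; ext j; rw [hddef]; ring
    rw [h4]; linarith
  have hzero : ∀ j, (∑ i, G j i * d i) = 0 := by
    intro j
    have e1 : ∫ ω, X j ω * ε' ω ∂P
        = ∫ ω, X j ω * (ε ω + ∑ i, X i ω * d i) ∂P := by
      refine integral_congr_ae ?_
      filter_upwards [hee] with ω h
      rw [h]
    rw [horth' j] at e1
    have hmemd : MemLp (fun ω => ∑ i, X i ω * d i) 2 P := hSum d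
    have h5 : ∀ ω, X j ω * (ε ω + ∑ i, X i ω * d i)
        = X j ω * ε ω + X j ω * (∑ i, X i ω * d i) := fun ω => by ring
    simp_rw [h5] at e1
    rw [integral_add (my_integrable_mul (hX j) hεmem) (my_integrable_mul (hX j) hmemd),
      horth j, key d j, zero_add] at e1
    exact e1.symm
  have hdzero : d = 0 := by
    by_contra hne
    have hp := hpos.dotProduct_mulVec_pos hne
    have hmv : G.mulVec d = 0 := by
      funext j
      simpa [Matrix.mulVec, dotProduct] using hzero j
    rw [hmv] at hp
    simp at hp
  have hββ : β' = β := by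
    funext i
    have := congrFun hdzero i
    simp only [hddef, Pi.zero_apply] at this
    linarith
  refine ⟨hββ, ?_⟩
  filter_upwards [hee] with ω h
  rw [h, hdzero]
  simp
end

section
/- Let k be a positive natural number. For each β ∈ ℝ^k, let 𝒮_β be the set of probability measures ℙ on the Borel σ-algebra of ℝ^{1+k} such that (i) the coordinate projections (π₁, …, π_{k+1}) form a fundamental random vector on (ℝ^{1+k}, Borel, ℙ) and (ii) the random variable η := π₁ − ∑_{j=2}^{k+1} π_j β_{j−1} is L²(ℙ) and satisfies ∫ π_j η dℙ = 0 for all 2 ≤ j ≤ k+1. Then: (a) for all β, β' ∈ ℝ^k with β ≠ β', the sets 𝒮_β and 𝒮_{β'} are disjoint; and (b) 𝓜_reg^{1,k} = ⋃_{β ∈ ℝ^k} 𝒮_β. -/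
open MeasureTheory ProbabilityTheory
open scoped ENNReal

/-- A random vector `(Y, X₁, …, X_k)` is a *fundamental random vector* iff each
component is L², no `X j` is almost surely `0`, and the `X j` are pairwise
orthogonal. -/
def IsFundamentalRandomVector {Ω : Type*} [MeasurableSpace Ω] (P : Measure Ω) {k : ℕ}
    (Y : Ω → ℝ) (X : Fin k → Ω → ℝ) : Prop :=
  MemLp Y 2 P ∧ (∀ j, MemLp (X j) 2 P) ∧ (∀ j, ¬ (X j =ᵐ[P] 0)) ∧
    ∀ j j', j ≠ j' → ∫ ω, X j ω * X j' ω ∂P = 0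

/-- The *stochastic linear regression model* `𝓜_reg^{1,k}`. -/
def Mreg (k : ℕ) : Set (Measure (Fin (k + 1) → ℝ)) :=
  {P | IsProbabilityMeasure P ∧
    (∀ j : Fin k, P {x | x j.succ = 0} < 1) ∧
    (∀ j : Fin (k + 1), MemLp (fun x => x j) 2 P) ∧
    ∀ j j' : Fin k, j ≠ j' → ∫ x, x j.succ * x j'.succ ∂P = 0}

/-- `𝒮_β`: the set of Borel probability measures `P` on `ℝ^{1+k}` such that the
coordinate projections form a fundamental random vector on `(ℝ^{1+k}, Borel, P)` and
`η := π₁ − ∑ j, π_{j+1} β_j` is L²(P) and orthogonal to every covariate coordinate. -/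
def Sset (k : ℕ) (β : Fin k → ℝ) : Set (Measure (Fin (k + 1) → ℝ)) :=
  {P | IsProbabilityMeasure P ∧
    IsFundamentalRandomVector P (fun x => x 0) (fun j x => x j.succ) ∧
    MemLp (fun x => x 0 - ∑ j, x j.succ * β j) 2 P ∧
    ∀ j : Fin k, ∫ x, x j.succ * (x 0 - ∑ i, x i.succ * β i) ∂P = 0}

section Aux

variable {Ω : Type*} [MeasurableSpace Ω] {P : Measure Ω}

lemma memL2_mul_integrable {f g : Ω → ℝ} (hf : MemLp f 2 P) (hg : MemLp g 2 P) :
    Integrable (fun x => f x * g x) P := by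
  rw [← memLp_one_iff_integrable]
  have : (1 : ℝ≥0∞) / 1 = 1 / 2 + 1 / 2 := by
    rw [ENNReal.div_add_div_same, one_add_one_eq_two,
      ENNReal.div_self (by norm_num) (by norm_num)]
    exact (ENNReal.div_self two_ne_zero ENNReal.ofNat_ne_top).symm
  exact hg.smul (r := 1) hf

lemma sq_integral_ne_zero {f : Ω → ℝ} (hf : MemLp f 2 P) (h0 : ¬ (f =ᵐ[P] 0)) :
    ∫ x, f x * f x ∂P ≠ 0 := by
  intro h
  have hint : Integrable (fun x => f x * f x) P := memL2_mul_integrable hf hf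
  have := (integral_eq_zero_iff_of_nonneg (fun x => mul_self_nonneg (f x)) hint).mp h
  apply h0
  filter_upwards [this] with x hx
  simpa [mul_self_eq_zero] using hx

/-- Key computation: orthogonality of the covariates reduces the cross term. -/
lemma key_integral {k : ℕ} (P : Measure (Fin (k + 1) → ℝ))
    (hX : ∀ j : Fin (k + 1), MemLp (fun x => x j) 2 P)
    (horth : ∀ j j' : Fin k, j ≠ j' → ∫ x, x j.succ * x j'.succ ∂P = 0)
    (β : Fin k → ℝ) (j : Fin k) :
    ∫ x, x j.succ * (x 0 - ∑ i, x i.succ * β i) ∂P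
      = ∫ x, x j.succ * x 0 ∂P - β j * ∫ x, x j.succ * x j.succ ∂P := by
  have hint : ∀ a b : Fin (k + 1), Integrable (fun x => x a * x b) P :=
    fun a b => memL2_mul_integrable (hX a) (hX b)
  have h1 : ∀ x : Fin (k + 1) → ℝ, x j.succ * (x 0 - ∑ i, x i.succ * β i)
      = x j.succ * x 0 - ∑ i, x j.succ * x i.succ * β i := by
    intro x
    rw [mul_sub, Finset.mul_sum]
    congr 1
    exact Finset.sum_congr rfl fun i _ => by ring
  have hintsum : Integrable (fun x => ∑ i, x j.succ * x i.succ * β i) P :=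
    integrable_finset_sum _ fun i _ => (hint j.succ i.succ).mul_const (β i)
  calc ∫ x, x j.succ * (x 0 - ∑ i, x i.succ * β i) ∂P
      = ∫ x, (x j.succ * x 0 - ∑ i, x j.succ * x i.succ * β i) ∂P := by
        simp_rw [h1]
    _ = ∫ x, x j.succ * x 0 ∂P - ∫ x, ∑ i, x j.succ * x i.succ * β i ∂P :=
        integral_sub (hint j.succ 0) hintsum
    _ = ∫ x, x j.succ * x 0 ∂P - β j * ∫ x, x j.succ * x j.succ ∂P := by
        congr 1
        rw [integral_finset_sum _ fun i _ => (hint j.succ i.succ).mul_const (β i)]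
        rw [Finset.sum_eq_single j]
        · rw [integral_mul_const]; ring
        · intro i _ hij
          rw [integral_mul_const, horth j i (Ne.symm hij), zero_mul]
        · simp

lemma ae_zero_iff_prob_one {k : ℕ} (P : Measure (Fin (k + 1) → ℝ))
    [IsProbabilityMeasure P] (j : Fin (k + 1)) :
    ((fun x : Fin (k + 1) → ℝ => x j) =ᵐ[P] 0) ↔ P {x | x j = 0} = 1 := by
  have hm : MeasurableSet {x : Fin (k + 1) → ℝ | x j = 0} :=
    (measurable_pi_apply j) (measurableSet_singleton 0)
  have hset : {a : Fin (k + 1) → ℝ | ¬ (fun x : Fin (k + 1) → ℝ => x j) a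
      = (0 : (Fin (k + 1) → ℝ) → ℝ) a} = {x : Fin (k + 1) → ℝ | x j = 0}ᶜ := by
    ext x; simp
  rw [Filter.EventuallyEq, ae_iff, hset, prob_compl_eq_zero_iff hm]

end Aux

/-- **Theorem 5 (parametrized representation of the stochastic linear regression
model).** The sets `𝒮_β` are pairwise disjoint, and `𝓜_reg^{1,k} = ⋃_β 𝒮_β`. -/
theorem stmt13 (k : ℕ) (hk : 0 < k) :
    (∀ β β' : Fin k → ℝ, β ≠ β' → Sset k β ∩ Sset k β' = ∅) ∧
    Mreg k = ⋃ β : Fin k → ℝ, Sset k β := by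
  constructor
  · -- disjointness
    intro β β' hne
    rw [Set.eq_empty_iff_forall_notMem]
    rintro P ⟨⟨hP, ⟨hY, hXL2, hX0, horth⟩, _, hortho⟩, ⟨_, _, _, hortho'⟩⟩
    haveI := hP
    apply hne
    have hX : ∀ j : Fin (k + 1), MemLp (fun x => x j) 2 P := by
      intro j
      refine Fin.cases ?_ ?_ j
      · exact hY
      · exact hXL2
    funext j
    have h1 := hortho j
    have h2 := hortho' j
    rw [key_integral P hX horth β j] at h1
    rw [key_integral P hX horth β' j] at h2
    have hsq : ∫ x, x j.succ * x j.succ ∂P ≠ 0 :=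
      sq_integral_ne_zero (hXL2 j) (hX0 j)
    have : β j * ∫ x, x j.succ * x j.succ ∂P
        = β' j * ∫ x, x j.succ * x j.succ ∂P := by linarith
    exact mul_right_cancel₀ hsq this
  · -- the union
    ext P
    simp only [Set.mem_iUnion]
    constructor
    · rintro ⟨hP, hnull, hX, horth⟩
      haveI := hP
      -- define β
      set β : Fin k → ℝ := fun j =>
        (∫ x, x j.succ * x 0 ∂P) / (∫ x, x j.succ * x j.succ ∂P) with hβ
      have hX0 : ∀ j : Fin k, ¬ ((fun x : Fin (k + 1) → ℝ => x j.succ) =ᵐ[P] 0) := by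
        intro j h
        exact absurd ((ae_zero_iff_prob_one P j.succ).mp h) (hnull j).ne
      have hsq : ∀ j : Fin k, ∫ x, x j.succ * x j.succ ∂P ≠ 0 :=
        fun j => sq_integral_ne_zero (hX j.succ) (hX0 j)
      refine ⟨β, hP, ⟨hX 0, fun j => hX j.succ, hX0, horth⟩, ?_, ?_⟩
      · exact (hX 0).sub <| memLp_finset_sum _ fun j _ => by simpa [mul_comm] using (hX j.succ).const_mul (β j)
      · intro j
        rw [key_integral P hX horth β j, hβ]
        simp only []
        rw [div_mul_cancel₀ _ (hsq j), sub_self]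
    · rintro ⟨β, hP, ⟨hY, hXL2, hX0, horth⟩, _, _⟩
      haveI := hP
      refine ⟨hP, ?_, ?_, horth⟩
      · intro j
        rcases lt_or_eq_of_le (prob_le_one (μ := P) (s := {x | x j.succ = 0})) with h | h
        · exact h
        · exact absurd ((ae_zero_iff_prob_one P j.succ).mpr h) (hX0 j)
      · intro j
        refine Fin.cases ?_ ?_ j
        · exact hY
        · exact hXL2
end

section
/- Let k be a positive natural number and for each β ∈ ℝ^k let 𝒮_β be the set of probability measures ℙ on the Borel σ-algebra of ℝ^{1+k} such that (i) the coordinate projections (π₁, …, π_{k+1}) form a fundamental random vector on (ℝ^{1+k}, Borel, ℙ) and (ii) η := π₁ − ∑_{j=2}^{k+1} π_j β_{j−1} is L²(ℙ) with ∫ π_j η dℙ = 0 for all 2 ≤ j ≤ k+1. Let Θ ⊆ ℝ^k and let (ℙ^β)_{β ∈ Θ} be any family with ℙ^β ∈ 𝒮_β for every β ∈ Θ. Then the map β ↦ ℙ^β from Θ to the set of probability measures on ℝ^{1+k} is injective. -/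
open MeasureTheory ProbabilityTheory

lemma memL2_integrable_mul {Ω : Type*} [MeasurableSpace Ω] {P : Measure Ω} {f g : Ω → ℝ}
    (hf : MemLp f 2 P) (hg : MemLp g 2 P) : Integrable (fun x => f x * g x) P := by
  have h : MemLp (f • g) 1 P := by
    haveI : ENNReal.HolderTriple 2 2 1 := ⟨by simp [one_div, ENNReal.inv_two_add_inv_two]⟩
    exact hg.smul hf
  rw [memLp_one_iff_integrable] at h
  exact h

/-- **Theorem 6 (parametrization injectiveness of stochastic linear regression).**
Any choice family `(P^β)_{β ∈ Θ}` with `P^β ∈ 𝒮_β` for every `β ∈ Θ ⊆ ℝᵏ` yields an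
injective map `β ↦ P^β` on `Θ`. -/
theorem stmt14 (k : ℕ) (hk : 0 < k) (Θ : Set (Fin k → ℝ))
    (Pfam : (Fin k → ℝ) → Measure (Fin (k + 1) → ℝ))
    (hPfam : ∀ β ∈ Θ, Pfam β ∈ Sset k β) :
    Set.InjOn Pfam Θ := by
  intro β₁ hβ₁ β₂ hβ₂ hP
  obtain ⟨hprob, ⟨hY, hX, hXne, hXorth⟩, hη₁, horth₁⟩ := hPfam β₁ hβ₁
  obtain ⟨_, _, hη₂, horth₂⟩ := hPfam β₂ hβ₂
  rw [← hP] at hη₂ horth₂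
  set P := Pfam β₁ with hPdef
  funext j
  -- integrability facts
  have hIntM : ∀ i i' : Fin k, Integrable (fun x => x i.succ * x i'.succ) P :=
    fun i i' => memL2_integrable_mul (hX i) (hX i')
  have h1 : Integrable (fun x => x j.succ * (x 0 - ∑ i, x i.succ * β₁ i)) P :=
    memL2_integrable_mul (hX j) hη₁
  have h2 : Integrable (fun x => x j.succ * (x 0 - ∑ i, x i.succ * β₂ i)) P :=
    memL2_integrable_mul (hX j) hη₂
  have hsub : ∫ x, (x j.succ * (x 0 - ∑ i, x i.succ * β₁ i)
      - x j.succ * (x 0 - ∑ i, x i.succ * β₂ i)) ∂P = 0 := by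
    rw [integral_sub h1 h2, horth₁ j, horth₂ j, sub_zero]
  have hkey : ∫ x, (∑ i, (β₂ i - β₁ i) * (x j.succ * x i.succ)) ∂P = 0 := by
    rw [← hsub]
    congr 1
    funext x
    have hstep : ∑ i, (β₂ i - β₁ i) * (x j.succ * x i.succ)
        = x j.succ * (∑ i, x i.succ * β₂ i) - x j.succ * (∑ i, x i.succ * β₁ i) := by
      rw [Finset.mul_sum, Finset.mul_sum, ← Finset.sum_sub_distrib]
      exact Finset.sum_congr rfl fun i _ => by ring
    rw [hstep]
    ring
  rw [integral_finset_sum _ (fun i _ => (hIntM j i).const_mul _)] at hkey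
  have heval : ∀ i : Fin k, (β₂ i - β₁ i) * ∫ x, x j.succ * x i.succ ∂P
      = ∫ x, (β₂ i - β₁ i) * (x j.succ * x i.succ) ∂P := by
    intro i
    rw [integral_const_mul]
  simp_rw [← heval] at hkey
  have hzero : ∀ i ∈ Finset.univ, i ≠ j →
      (β₂ i - β₁ i) * ∫ x, x j.succ * x i.succ ∂P = 0 := by
    intro i _ hij
    rw [hXorth j i (Ne.symm hij), mul_zero]
  rw [Finset.sum_eq_single_of_mem j (Finset.mem_univ j) hzero] at hkey
  -- the second moment is positive
  have hsq : ∫ x, x j.succ * x j.succ ∂P ≠ 0 := by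
    intro h
    apply hXne j
    have hnn : 0 ≤ᵐ[P] fun x => x j.succ * x j.succ :=
      Filter.Eventually.of_forall fun x => mul_self_nonneg _
    have := (integral_eq_zero_iff_of_nonneg_ae hnn (hIntM j j)).mp h
    filter_upwards [this] with x hx
    have : x j.succ * x j.succ = 0 := hx
    simpa [mul_self_eq_zero] using this
  have : β₂ j - β₁ j = 0 := by
    rcases mul_eq_zero.mp hkey with h | h
    · exact h
    · exact absurd h hsq
  linarith
end
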